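/- Let α ∈ (0,1) and μ₀ a probability measure on ℝ with finite first moment. With c(x,y) = (x−y)² and linear penalization φ(x) = x (so φ* = ∞·1_{(1,∞)}), the robust average value-at-risk inf_{λ ∈ [0,1]} OCE(l^{λc}) equals AV@R_α(μ₀) + 1/(4α), where l(x) = x⁺/α and l^{λc}(x) = (1/α)(x + 1/(4λα))⁺ for λ > 0. -/

import Mathlib

open MeasureTheory Set Filter Topology ENNReal

noncomputable section

def erealToENNReal (a : EReal) : ℝ≥0∞ := if a = ⊤ then ⊤ else ENNReal.ofReal a.toReal

/-- Extended integral of an `EReal`-valued function. -/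
def eint (μ : Measure ℝ) (h : ℝ → EReal) : EReal :=
  ((∫⁻ x, erealToENNReal (h x) ∂μ : ℝ≥0∞) : EReal)
    - ((∫⁻ x, erealToENNReal (-(h x)) ∂μ : ℝ≥0∞) : EReal)

/-- `λc`-transform with translation-invariant cost. -/
def lamTrans (ctil : ℝ → ℝ≥0∞) (lam : ℝ) (g : ℝ → EReal) (x : ℝ) : EReal :=
  ⨆ y : ℝ, (g y - (lam : EReal) * (ctil (y - x) : EReal))

/-- Optimized certainty equivalent of an `EReal`-valued loss. -/
def OCEe (μ : Measure ℝ) (h : ℝ → EReal) : EReal :=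
  ⨅ m : ℝ, (eint μ (fun x => h (x - m)) + (m : EReal))

lemma erealToENNReal_coe (r : ℝ) : erealToENNReal (r : EReal) = ENNReal.ofReal r := by
  simp [erealToENNReal]

/-- `eint` of (the coercion of) an integrable real function is its Bochner integral. -/
lemma eint_coe (μ : Measure ℝ) (f : ℝ → ℝ) (hf : Integrable f μ) :
    eint μ (fun x => ((f x : ℝ) : EReal)) = ((∫ x, f x ∂μ : ℝ) : EReal) := by
  have hle : ∀ g : ℝ → ℝ, (∀ x, g x ≤ |f x|) →
      (∫⁻ x, ENNReal.ofReal (g x) ∂μ) ≠ ⊤ := by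
    intro g hg
    have h1 : (∫⁻ x, ENNReal.ofReal (g x) ∂μ) ≤ ∫⁻ x, ‖f x‖₊ ∂μ := by
      refine lintegral_mono fun x => ?_
      rw [← enorm_eq_nnnorm, ← ofReal_norm, Real.norm_eq_abs]
      exact ENNReal.ofReal_le_ofReal (hg x)
    exact ne_top_of_le_ne_top hf.hasFiniteIntegral.ne h1
  have ha : (∫⁻ x, ENNReal.ofReal (f x) ∂μ) ≠ ⊤ := hle f fun x => le_abs_self _
  have hb : (∫⁻ x, ENNReal.ofReal (-f x) ∂μ) ≠ ⊤ := hle (fun x => -f x) fun x => neg_le_abs _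
  have key : ∀ a : ℝ≥0∞, a ≠ ⊤ → (a : EReal) = ((a.toReal : ℝ) : EReal) := by
    intro a h
    conv_lhs => rw [← ENNReal.ofReal_toReal h]
    rw [EReal.coe_ennreal_ofReal, max_eq_left ENNReal.toReal_nonneg]
  unfold eint
  have hfun : ∀ x : ℝ, erealToENNReal ((f x : ℝ) : EReal) = ENNReal.ofReal (f x) := by
    intro x; exact erealToENNReal_coe _
  have hfun' : ∀ x : ℝ, erealToENNReal (-((f x : ℝ) : EReal)) = ENNReal.ofReal (-f x) := by
    intro x; rw [← EReal.coe_neg]; exact erealToENNReal_coe _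
  simp_rw [hfun, hfun']
  rw [key _ ha, key _ hb, ← EReal.coe_sub, EReal.coe_eq_coe_iff]
  exact (integral_eq_lintegral_pos_part_sub_lintegral_neg_part hf).symm

/-- The `λc`-transform of the AV@R loss, for `λ > 0`. -/
lemma lamTrans_eq {α : ℝ} (hα : 0 < α) {lam : ℝ} (hlam : 0 < lam) (x : ℝ) :
    lamTrans (fun d => ENNReal.ofReal (d ^ 2)) lam (fun y => ((max y 0 / α : ℝ) : EReal)) x
      = ((max (x + 1 / (4 * lam * α)) 0 / α : ℝ) : EReal) := by
  have hterm : ∀ y : ℝ,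
      ((max y 0 / α : ℝ) : EReal) - (lam : EReal) * ((ENNReal.ofReal ((y - x) ^ 2)) : EReal)
        = ((max y 0 / α - lam * (y - x) ^ 2 : ℝ) : EReal) := by
    intro y
    rw [EReal.coe_ennreal_ofReal, max_eq_left (sq_nonneg _), ← EReal.coe_mul, ← EReal.coe_sub]
  unfold lamTrans
  simp_rw [hterm]
  have hα' : α ≠ 0 := hα.ne'
  have hlam' : lam ≠ 0 := hlam.ne'
  have h2 : (0:ℝ) < 4 * lam * α := by positivity
  have hinv : 1 / (4 * lam * α) * (4 * lam * α) = 1 := div_mul_cancel₀ 1 (ne_of_gt h2)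
  have ht0 : (0:ℝ) < 1 / (4 * lam * α) := by positivity
  apply le_antisymm
  · refine iSup_le fun y => ?_
    refine EReal.coe_le_coe_iff.2 ?_
    rcases le_total y 0 with hy | hy
    · rw [max_eq_right hy]
      have h1 : (0:ℝ) ≤ lam * (y - x) ^ 2 := by positivity
      have hmx : (0:ℝ) ≤ max (x + 1 / (4 * lam * α)) 0 / α :=
        div_nonneg (le_max_right _ _) hα.le
      rw [zero_div]
      linarith
    · rw [max_eq_left hy]
      have key : y / α - lam * (y - x) ^ 2 ≤ (x + 1 / (4 * lam * α)) / α := by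
        have heq : y / α - lam * (y - x) ^ 2 = (y - lam * (y - x) ^ 2 * α) / α := by
          field_simp
        rw [heq, div_le_div_iff₀ hα hα]
        nlinarith [sq_nonneg (2 * lam * α * (y - x) - 1), mul_pos hlam hα, hinv,
          sq_nonneg (y - x), mul_pos (mul_pos hlam hα) hα]
      refine key.trans ?_
      gcongr
      exact le_max_left _ _
  · rcases le_or_gt (x + 1 / (4 * lam * α)) 0 with h | h
    · refine le_trans ?_ (le_iSup _ x)
      refine EReal.coe_le_coe_iff.2 ?_
      have hx : x ≤ 0 := by linarith
      rw [max_eq_right h, max_eq_right hx]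
      simp
    · refine le_trans ?_ (le_iSup _ (x + 2 * (1 / (4 * lam * α))))
      refine EReal.coe_le_coe_iff.2 (le_of_eq ?_)
      have hy0 : (0:ℝ) ≤ x + 2 * (1 / (4 * lam * α)) := by linarith
      rw [max_eq_left h.le, max_eq_left hy0]
      field_simp
      ring

/-- OCE of the transformed loss, for `0 < λ`. -/
lemma OCEe_eq {α : ℝ} (hα0 : 0 < α) (hα1 : α < 1) (μ₀ : Measure ℝ) [IsProbabilityMeasure μ₀]
    (hint : Integrable (fun x : ℝ => x) μ₀) {lam : ℝ} (hlam : 0 < lam) :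
    OCEe μ₀ (lamTrans (fun d => ENNReal.ofReal (d ^ 2)) lam
        (fun x => ((max x 0 / α : ℝ) : EReal)))
      = (((⨅ m : ℝ, ((1 / α) * ∫ x, max (x - m) 0 ∂μ₀ + m)) + 1 / (4 * lam * α) : ℝ) : EReal) := by
  set t := 1 / (4 * lam * α) with ht
  set F : ℝ → ℝ := fun m => (1 / α) * ∫ x, max (x - m) 0 ∂μ₀ + m with hF
  have hintm : ∀ m : ℝ, Integrable (fun x => max (x - m) 0) μ₀ := by
    intro m
    have h1 : Integrable (fun x : ℝ => x - m) μ₀ := hint.sub (integrable_const m)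
    have h2 := h1.sup (integrable_const (0 : ℝ))
    exact h2.congr (Filter.Eventually.of_forall fun x => rfl)
  have hFlb : ∀ m, ∫ x, x ∂μ₀ ≤ F m := by
    intro m
    have h0 : ∫ x, (x - m) ∂μ₀ ≤ ∫ x, max (x - m) 0 ∂μ₀ :=
      integral_mono (hint.sub (integrable_const m)) (hintm m) fun x => le_max_left _ _
    have h1 : ∫ x, (x - m) ∂μ₀ = (∫ x, x ∂μ₀) - m := by
      rw [integral_sub hint (integrable_const m), integral_const]; simp
    have h2 : 0 ≤ ∫ x, max (x - m) 0 ∂μ₀ := integral_nonneg fun x => le_max_right _ _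
    have h1α : 1 ≤ 1 / α := by rw [le_div_iff₀ hα0]; linarith
    have h3 : ∫ x, max (x - m) 0 ∂μ₀ ≤ (1 / α) * ∫ x, max (x - m) 0 ∂μ₀ := by
      nlinarith
    simp only [hF]
    linarith
  have hGint : ∀ m : ℝ, Integrable (fun x => max (x - m + t) 0 / α) μ₀ := by
    intro m
    have heq : (fun x : ℝ => max (x - m + t) 0 / α) = fun x => max (x - (m - t)) 0 / α := by
      funext x; ring_nf
    rw [heq]
    exact (hintm (m - t)).div_const α
  have htrans : ∀ m : ℝ,
      (fun x => lamTrans (fun d => ENNReal.ofReal (d ^ 2)) lam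
        (fun y => ((max y 0 / α : ℝ) : EReal)) (x - m))
        = fun x => (((max (x - m + t) 0 / α : ℝ)) : EReal) := by
    intro m; funext x
    rw [lamTrans_eq hα0 hlam]
  have hterm : ∀ m : ℝ,
      eint μ₀ (fun x => lamTrans (fun d => ENNReal.ofReal (d ^ 2)) lam
          (fun y => ((max y 0 / α : ℝ) : EReal)) (x - m)) + (m : EReal)
        = ((F (m - t) + t : ℝ) : EReal) := by
    intro m
    rw [htrans m, eint_coe μ₀ _ (hGint m), ← EReal.coe_add, EReal.coe_eq_coe_iff]
    have hi : ∫ x, max (x - m + t) 0 / α ∂μ₀ = (1 / α) * ∫ x, max (x - (m - t)) 0 ∂μ₀ := by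
      rw [integral_div]
      rw [div_eq_mul_inv, mul_comm, inv_eq_one_div]
      congr 1
      apply integral_congr_ae
      filter_upwards with x
      ring_nf
    rw [hi]
    simp only [hF]
    ring
  unfold OCEe
  simp_rw [hterm]
  have hbdd : BddBelow (Set.range fun m => F (m - t) + t) := by
    refine ⟨(∫ x, x ∂μ₀) + t, ?_⟩
    rintro _ ⟨m, rfl⟩
    exact add_le_add_left (hFlb _) t
  have hcoe : (⨅ m : ℝ, (((F (m - t) + t : ℝ)) : EReal))
      = (((⨅ m : ℝ, (F (m - t) + t) : ℝ)) : EReal) := by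
    symm
    exact Monotone.map_ciInf_of_continuousAt continuous_coe_real_ereal.continuousAt
      (fun a b h => EReal.coe_le_coe_iff.2 h) hbdd
  rw [hcoe, EReal.coe_eq_coe_iff]
  have hbdd' : BddBelow (Set.range fun m => F (m - t)) := by
    refine ⟨∫ x, x ∂μ₀, ?_⟩
    rintro _ ⟨m, rfl⟩
    exact hFlb _
  have h1 : (⨅ m : ℝ, (F (m - t) + t)) = (⨅ m : ℝ, F (m - t)) + t := by
    symm
    exact Monotone.map_ciInf_of_continuousAt (f := fun r : ℝ => r + t)
      (continuous_add_right t).continuousAt (monotone_id.add_const t) hbdd'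
  have h2 : (⨅ m : ℝ, F (m - t)) = ⨅ m : ℝ, F m := by
    rw [iInf, iInf]
    congr 1
    have hs : Function.Surjective (fun m : ℝ => m - t) := fun y => ⟨y + t, by ring⟩
    exact hs.range_comp F
  rw [h1, h2]

/-- with `l(x) = x⁺/α`, cost `c(x,y) = (x−y)²` and linear penalization
`φ(x) = x` (so `φ* = ∞·1_{(1,∞)}`), the robust average value-at-risk
`inf_{λ ∈ [0,1]} OCE(l^{λc})` equals `AV@R_α(μ₀) + 1/(4α)`. -/
theorem robust_AVaR_wasserstein2_linear_penalty (α : ℝ) (hα : α ∈ Set.Ioo (0 : ℝ) 1)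
    (μ₀ : Measure ℝ) [IsProbabilityMeasure μ₀] (hint : Integrable (fun x : ℝ => x) μ₀) :
    (⨅ (lam : ℝ) (_ : lam ∈ Set.Icc (0 : ℝ) 1),
        OCEe μ₀ (lamTrans (fun d => ENNReal.ofReal (d ^ 2)) lam
          (fun x => ((max x 0 / α : ℝ) : EReal))))
      = (((⨅ m : ℝ, ((1 / α) * ∫ x, max (x - m) 0 ∂μ₀ + m)) + 1 / (4 * α) : ℝ) : EReal) := by
  obtain ⟨hα0, hα1⟩ := hα
  apply le_antisymm
  · refine iInf₂_le_of_le 1 ⟨zero_le_one, le_refl 1⟩ ?_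
    rw [OCEe_eq hα0 hα1 μ₀ hint one_pos]
    norm_num
  · refine le_iInf₂ fun lam hlam => ?_
    rcases eq_or_lt_of_le hlam.1 with h0 | h0
    · -- `λ = 0` : the value is `⊤`
      have htop : OCEe μ₀ (lamTrans (fun d => ENNReal.ofReal (d ^ 2)) lam
          (fun x => ((max x 0 / α : ℝ) : EReal))) = ⊤ := by
        have hsup : ∀ z : ℝ, lamTrans (fun d => ENNReal.ofReal (d ^ 2)) lam
            (fun x => ((max x 0 / α : ℝ) : EReal)) z = ⊤ := by
          intro z
          unfold lamTrans
          rw [← h0]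
          have hz : ∀ y : ℝ, ((max y 0 / α : ℝ) : EReal) - ((0 : ℝ) : EReal)
              * ((ENNReal.ofReal ((y - z) ^ 2)) : EReal) = ((max y 0 / α : ℝ) : EReal) := by
            intro y
            rw [EReal.coe_zero, zero_mul]
            simp [sub_eq_add_neg]
          simp_rw [hz]
          rw [iSup_eq_top]
          intro b hb
          induction b with
          | bot => exact ⟨0, bot_lt_iff_ne_bot.2 (EReal.coe_ne_bot _)⟩
          | coe r =>
            refine ⟨α * (|r| + 1), ?_⟩
            have hy : 0 < α * (|r| + 1) := by positivity
            rw [max_eq_left hy.le]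
            refine EReal.coe_lt_coe_iff.2 ?_
            rw [mul_comm, mul_div_assoc, div_self hα0.ne', mul_one]
            have := le_abs_self r
            linarith
          | top => exact absurd hb (lt_irrefl _)
        unfold OCEe
        have heint : ∀ m : ℝ, eint μ₀ (fun x => lamTrans (fun d => ENNReal.ofReal (d ^ 2)) lam
            (fun y => ((max y 0 / α : ℝ) : EReal)) (x - m)) = ⊤ := by
          intro m
          have : (fun x => lamTrans (fun d => ENNReal.ofReal (d ^ 2)) lam
              (fun y => ((max y 0 / α : ℝ) : EReal)) (x - m)) = fun _ => (⊤ : EReal) := by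
            funext x; exact hsup _
          rw [this]
          unfold eint
          have e1 : erealToENNReal (⊤ : EReal) = ⊤ := by simp [erealToENNReal]
          have e2 : erealToENNReal (-(⊤ : EReal)) = 0 := by
            simp [erealToENNReal]
          simp only [e1, e2]
          rw [lintegral_const, lintegral_const]
          simp [measure_univ]
        simp_rw [heint]
        have htopadd : ∀ m : ℝ, (⊤ : EReal) + (m : EReal) = ⊤ := by
          intro m
          exact EReal.top_add_of_ne_bot (EReal.coe_ne_bot _)
        simp_rw [htopadd]
        exact iInf_const
      rw [htop]
      exact le_top
    · rw [OCEe_eq hα0 hα1 μ₀ hint h0]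
      refine EReal.coe_le_coe_iff.2 ?_
      have hmono : 1 / (4 * α) ≤ 1 / (4 * lam * α) := by
        apply one_div_le_one_div_of_le (by positivity)
        nlinarith [hlam.2]
      linarith

end
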